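/- Under hypotheses H1–H2, if in addition (∂F₂/∂S)(S, I₂) ≤ I₂ for all S, I₂ ≥ 0, then system (3) admits a unique single-strain-2 equilibrium, i.e. a unique triple (S̃, Ṽ₁, Ĩ₂) with S̃, Ṽ₁, Ĩ₂ > 0 satisfying Λ − F₂(S̃, Ĩ₂) − λS̃ = 0, rS̃ − (μ + kĨ₂)Ṽ₁ = 0 and F₂(S̃, Ĩ₂) + kĨ₂Ṽ₁ − α₂Ĩ₂ = 0, if and only if R₂ > 1. -/

import Mathlib

lemma deriv_le_helper {f f' : ℝ → ℝ} {a b : ℝ} (hab : a ≤ b)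
    (hd : ∀ x ∈ Set.Icc a b, HasDerivAt f (f' x) x)
    (h0 : ∀ x ∈ Set.Ioo a b, 0 ≤ f' x) : f a ≤ f b := by
  rcases eq_or_lt_of_le hab with h | h
  · rw [h]
  · have hcont : ContinuousOn f (Set.Icc a b) :=
      fun x hx => (hd x hx).continuousAt.continuousWithinAt
    obtain ⟨c, hc, hslope⟩ := exists_hasDerivAt_eq_slope f f' h hcont
      (fun x hx => hd x ⟨hx.1.le, hx.2.le⟩)
    have h2 : 0 ≤ (f b - f a) / (b - a) := hslope ▸ h0 c hc
    have h3 := mul_nonneg h2 (sub_pos.2 h).le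
    rw [div_mul_cancel₀ _ (sub_pos.2 h).ne'] at h3
    linarith


set_option maxHeartbeats 4000000 in


/-- Theorem 4.6: under H1–H2 and ∂F₂/∂S(S,I₂) ≤ I₂ on the first quadrant,
system (3) admits a unique single-strain-2 equilibrium iff R₂ > 1. -/
theorem strain2_equilibrium_unique_iff
    (Λ r μ k α₁ α₂ lam : ℝ)
    (hΛ : 0 < Λ) (hr : 0 < r) (hμ : 0 < μ) (hk : 0 < k)
    (hα₁ : μ < α₁) (hα₂ : μ < α₂) (hlam : lam = r + μ)
    (F₁ F₂ f₁ f₂ F₁S F₁I F₂S F₂I f₁S f₁I f₂S f₂I : ℝ → ℝ → ℝ)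
    (hF₁nn : ∀ S I : ℝ, 0 ≤ S → 0 ≤ I → 0 ≤ F₁ S I)
    (hF₂nn : ∀ S I : ℝ, 0 ≤ S → 0 ≤ I → 0 ≤ F₂ S I)
    (hF₁C1 : ContDiffOn ℝ 1 (fun p : ℝ × ℝ => F₁ p.1 p.2) {p : ℝ × ℝ | 0 ≤ p.1 ∧ 0 ≤ p.2})
    (hF₂C1 : ContDiffOn ℝ 1 (fun p : ℝ × ℝ => F₂ p.1 p.2) {p : ℝ × ℝ | 0 ≤ p.1 ∧ 0 ≤ p.2})
    (hf₁C1 : ContDiffOn ℝ 1 (fun p : ℝ × ℝ => f₁ p.1 p.2) {p : ℝ × ℝ | 0 ≤ p.1 ∧ 0 ≤ p.2})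
    (hf₂C1 : ContDiffOn ℝ 1 (fun p : ℝ × ℝ => f₂ p.1 p.2) {p : ℝ × ℝ | 0 ≤ p.1 ∧ 0 ≤ p.2})
    (hH1₁ : ∀ S I : ℝ, F₁ S I = I * f₁ S I)
    (hH1₂ : ∀ S I : ℝ, F₂ S I = I * f₂ S I)
    (hF₁zero : ∀ S I : ℝ, 0 ≤ S → 0 ≤ I → F₁ 0 I = 0 ∧ F₁ S 0 = 0)
    (hF₂zero : ∀ S I : ℝ, 0 ≤ S → 0 ≤ I → F₂ 0 I = 0 ∧ F₂ S 0 = 0)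
    (hdF₁S : ∀ S I : ℝ, 0 ≤ S → 0 ≤ I → HasDerivAt (fun x => F₁ x I) (F₁S S I) S)
    (hdF₁I : ∀ S I : ℝ, 0 ≤ S → 0 ≤ I → HasDerivAt (fun y => F₁ S y) (F₁I S I) I)
    (hdF₂S : ∀ S I : ℝ, 0 ≤ S → 0 ≤ I → HasDerivAt (fun x => F₂ x I) (F₂S S I) S)
    (hdF₂I : ∀ S I : ℝ, 0 ≤ S → 0 ≤ I → HasDerivAt (fun y => F₂ S y) (F₂I S I) I)
    (hdf₁S : ∀ S I : ℝ, 0 ≤ S → 0 ≤ I → HasDerivAt (fun x => f₁ x I) (f₁S S I) S)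
    (hdf₁I : ∀ S I : ℝ, 0 ≤ S → 0 ≤ I → HasDerivAt (fun y => f₁ S y) (f₁I S I) I)
    (hdf₂S : ∀ S I : ℝ, 0 ≤ S → 0 ≤ I → HasDerivAt (fun x => f₂ x I) (f₂S S I) S)
    (hdf₂I : ∀ S I : ℝ, 0 ≤ S → 0 ≤ I → HasDerivAt (fun y => f₂ S y) (f₂I S I) I)
    (hH2f₁S : ∀ S I : ℝ, 0 ≤ S → 0 ≤ I → 0 < f₁S S I)
    (hH2f₁I : ∀ S I : ℝ, 0 ≤ S → 0 ≤ I → f₁I S I ≤ 0)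
    (hH2f₂S : ∀ S I : ℝ, 0 ≤ S → 0 ≤ I → 0 < f₂S S I)
    (hH2f₂I : ∀ S I : ℝ, 0 ≤ S → 0 ≤ I → f₂I S I ≤ 0)
    (hF₂Sle : ∀ S I : ℝ, 0 ≤ S → 0 ≤ I → F₂S S I ≤ I)
    (R₂ : ℝ) (hR₂ : R₂ = F₂I (Λ / lam) 0 / α₂ + (k * r * Λ) / (α₂ * μ * lam)) :
    ((∃ St Vt It : ℝ, 0 < St ∧ 0 < Vt ∧ 0 < It ∧
        Λ - F₂ St It - lam * St = 0 ∧ r * St - (μ + k * It) * Vt = 0 ∧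
        F₂ St It + k * It * Vt - α₂ * It = 0) ↔ 1 < R₂) ∧
    (∀ St Vt It St' Vt' It' : ℝ,
      (0 < St ∧ 0 < Vt ∧ 0 < It ∧ Λ - F₂ St It - lam * St = 0 ∧
        r * St - (μ + k * It) * Vt = 0 ∧ F₂ St It + k * It * Vt - α₂ * It = 0) →
      (0 < St' ∧ 0 < Vt' ∧ 0 < It' ∧ Λ - F₂ St' It' - lam * St' = 0 ∧
        r * St' - (μ + k * It') * Vt' = 0 ∧ F₂ St' It' + k * It' * Vt' - α₂ * It' = 0) →
      St = St' ∧ Vt = Vt' ∧ It = It') := by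
  have hlam0 : 0 < lam := by rw [hlam]; linarith
  have hα₂0 : 0 < α₂ := hμ.trans hα₂
  set S0 : ℝ := Λ / lam with hS0def
  have hS0pos : 0 < S0 := div_pos hΛ hlam0
  have hS0eq : lam * S0 = Λ := by rw [hS0def]; field_simp
  -- monotonicity facts
  have hf₂monoS : ∀ I : ℝ, 0 ≤ I → ∀ S1 S2 : ℝ, 0 ≤ S1 → S1 ≤ S2 → f₂ S1 I ≤ f₂ S2 I := by
    intro I hI S1 S2 hS1 h12
    exact deriv_le_helper h12 (fun x hx => hdf₂S x I (hS1.trans hx.1) hI)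
      (fun x hx => (hH2f₂S x I (hS1.trans hx.1.le) hI).le)
  have hf₂antiI : ∀ S : ℝ, 0 ≤ S → ∀ I1 I2 : ℝ, 0 ≤ I1 → I1 ≤ I2 → f₂ S I2 ≤ f₂ S I1 := by
    intro S hS I1 I2 hI1 h12
    have := deriv_le_helper (f := fun y => -f₂ S y) (f' := fun y => -f₂I S y) h12
      (fun x hx => (hdf₂I S x hS (hI1.trans hx.1)).neg)
      (fun x hx => neg_nonneg.2 (hH2f₂I S x hS (hI1.trans hx.1.le)))
    simpa using this
  have hf₂nn : ∀ S I : ℝ, 0 ≤ S → 0 < I → 0 ≤ f₂ S I := by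
    intro S I hS hI
    have h := hF₂nn S I hS hI.le
    rw [hH1₂] at h
    nlinarith
  have hF₂monoS : ∀ I : ℝ, 0 ≤ I → ∀ S1 S2 : ℝ, 0 ≤ S1 → S1 ≤ S2 → F₂ S1 I ≤ F₂ S2 I := by
    intro I hI S1 S2 hS1 h12
    rw [hH1₂, hH1₂]
    exact mul_le_mul_of_nonneg_left (hf₂monoS I hI S1 S2 hS1 h12) hI
  have hF₂Ival : F₂I S0 0 = f₂ S0 0 := by
    have h1 : HasDerivAt (fun y => F₂ S0 y) (F₂I S0 0) 0 := hdF₂I S0 0 hS0pos.le le_rfl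
    have h2 : HasDerivAt (fun y : ℝ => y * f₂ S0 y) (1 * f₂ S0 0 + 0 * f₂I S0 0) 0 :=
      (hasDerivAt_id 0).mul (hdf₂I S0 0 hS0pos.le le_rfl)
    have h3 : (fun y => F₂ S0 y) = fun y : ℝ => y * f₂ S0 y := funext fun y => hH1₂ S0 y
    rw [h3] at h1
    have := h1.unique h2
    simpa using this
  have hR2val : α₂ * R₂ = f₂ S0 0 + k * r * S0 / μ := by
    rw [hR₂, hF₂Ival, hS0def]
    field_simp
  clear_value S0
  -- forward direction
  have fwd : (∃ St Vt It : ℝ, 0 < St ∧ 0 < Vt ∧ 0 < It ∧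
        Λ - F₂ St It - lam * St = 0 ∧ r * St - (μ + k * It) * Vt = 0 ∧
        F₂ St It + k * It * Vt - α₂ * It = 0) → 1 < R₂ := by
    rintro ⟨S, V, I, hS, hV, hI, e1, e2, e3⟩
    have hD : 0 < μ + k * I := by positivity
    have hSS0 : S ≤ S0 := by
      have h0 : 0 ≤ F₂ S I := hF₂nn S I hS.le hI.le
      nlinarith [hS0eq]
    have he3 : f₂ S I + k * V = α₂ := by
      have h4 : I * (f₂ S I + k * V - α₂) = 0 := by
        rw [hH1₂] at e3; linear_combination e3
      rcases mul_eq_zero.1 h4 with h | h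
      · exact absurd h hI.ne'
      · linarith
    have hc1 : f₂ S I ≤ f₂ S0 0 :=
      le_trans (hf₂antiI S hS.le 0 I le_rfl hI.le) (hf₂monoS 0 le_rfl S S0 hS.le hSS0)
    have hVeq : (μ + k * I) * V = r * S := by linarith
    have hc2 : k * V < k * r * S0 / μ := by
      rw [lt_div_iff₀ hμ]
      nlinarith [mul_pos (mul_pos hk hV) (mul_pos hk hI), mul_le_mul_of_nonneg_left hSS0 (mul_pos hk hr).le]
    have hlt : α₂ < α₂ * R₂ := by rw [hR2val]; linarith
    by_contra hcon
    push_neg at hcon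
    nlinarith [mul_le_mul_of_nonneg_left hcon hα₂0.le]
  -- uniqueness core
  have key : ∀ S V I S' V' I' : ℝ,
      (0 < S ∧ 0 < V ∧ 0 < I ∧ Λ - F₂ S I - lam * S = 0 ∧
        r * S - (μ + k * I) * V = 0 ∧ F₂ S I + k * I * V - α₂ * I = 0) →
      (0 < S' ∧ 0 < V' ∧ 0 < I' ∧ Λ - F₂ S' I' - lam * S' = 0 ∧
        r * S' - (μ + k * I') * V' = 0 ∧ F₂ S' I' + k * I' * V' - α₂ * I' = 0) →
      I < I' → False := by
    rintro S V I S' V' I' ⟨hS, hV, hI, e1, e2, e3⟩ ⟨hS', hV', hI', e1', e2', e3'⟩ hII'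
    have hD : 0 < μ + k * I := by positivity
    have hD' : 0 < μ + k * I' := by positivity
    have hVeq : (μ + k * I) * V = r * S := by linarith
    have hVeq' : (μ + k * I') * V' = r * S' := by linarith
    have ha : 0 ≤ f₂ S I := hf₂nn S I hS.le hI
    have ha' : 0 ≤ f₂ S' I' := hf₂nn S' I' hS'.le hI'
    have he3 : f₂ S I + k * V = α₂ := by
      have h4 : I * (f₂ S I + k * V - α₂) = 0 := by
        rw [hH1₂] at e3; linear_combination e3
      rcases mul_eq_zero.1 h4 with h | h
      · exact absurd h hI.ne'
      · linarith
    have he3' : f₂ S' I' + k * V' = α₂ := by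
      have h4 : I' * (f₂ S' I' + k * V' - α₂) = 0 := by
        rw [hH1₂] at e3'; linear_combination e3'
      rcases mul_eq_zero.1 h4 with h | h
      · exact absurd h hI'.ne'
      · linarith
    have he1 : I * f₂ S I + lam * S = Λ := by rw [hH1₂] at e1; linarith
    have he1' : I' * f₂ S' I' + lam * S' = Λ := by rw [hH1₂] at e1'; linarith
    rcases le_or_gt S' S with hc | hc
    · have h1 : f₂ S' I' ≤ f₂ S I :=
        le_trans (hf₂monoS I' (hI.trans hII').le S' S hS'.le hc)
          (hf₂antiI S hS.le I I' hI.le hII'.le)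
      have hVV : V' < V := by
        have h6 : V * (μ + k * I) < V * (μ + k * I') := by
          have h7 : k * I < k * I' := (mul_lt_mul_iff_right₀ hk).2 hII'
          apply mul_lt_mul_of_pos_left _ hV
          linarith
        have h5 : V' * (μ + k * I') < V * (μ + k * I') := by
          have h8 : r * S' ≤ r * S := mul_le_mul_of_nonneg_left hc hr.le
          linarith
        exact lt_of_mul_lt_mul_right h5 hD'.le
      linarith [mul_lt_mul_of_pos_left hVV hk]
    · have hkey : (f₂ S I - f₂ S' I') * ((μ + k * I) * (μ + k * I')) =
          k * r * (S' * (μ + k * I) - S * (μ + k * I')) := by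
        linear_combination ((μ + k * I) * (μ + k * I')) * he3
          - ((μ + k * I) * (μ + k * I')) * he3'
          - k * (μ + k * I') * hVeq + k * (μ + k * I) * hVeq'
      have hid : I' * (f₂ S I - f₂ S' I') = f₂ S I * (I' - I) + lam * (S' - S) := by
        linear_combination he1 - he1'
      have hlow : lam * (S' - S) ≤ I' * (f₂ S I - f₂ S' I') := by
        nlinarith [mul_nonneg ha (sub_pos.2 hII').le]
      have hb : k * r * I' < lam * (μ + k * I') := by
        rw [hlam]; nlinarith [mul_pos hμ hD', mul_pos hr hμ]
      have hmul : I' * ((f₂ S I - f₂ S' I') * ((μ + k * I) * (μ + k * I'))) =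
          k * r * I' * (S' * (μ + k * I) - S * (μ + k * I')) := by
        linear_combination I' * hkey
      nlinarith [hmul, mul_le_mul_of_nonneg_right hlow (mul_pos hD hD').le,
        mul_pos (sub_pos.2 hb) (mul_pos hD (sub_pos.2 hc)),
        mul_pos (mul_pos (mul_pos hk hr) (hI.trans hII'))
          (mul_pos (mul_pos hk hS) (sub_pos.2 hII'))]
  -- assembled uniqueness
  have uniq : ∀ St Vt It St' Vt' It' : ℝ,
      (0 < St ∧ 0 < Vt ∧ 0 < It ∧ Λ - F₂ St It - lam * St = 0 ∧
        r * St - (μ + k * It) * Vt = 0 ∧ F₂ St It + k * It * Vt - α₂ * It = 0) →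
      (0 < St' ∧ 0 < Vt' ∧ 0 < It' ∧ Λ - F₂ St' It' - lam * St' = 0 ∧
        r * St' - (μ + k * It') * Vt' = 0 ∧ F₂ St' It' + k * It' * Vt' - α₂ * It' = 0) →
      St = St' ∧ Vt = Vt' ∧ It = It' := by
    intro S V I S' V' I' h h'
    have hII : I = I' := by
      rcases lt_trichotomy I I' with hlt | heq | hgt
      · exact (key S V I S' V' I' h h' hlt).elim
      · exact heq
      · exact (key S' V' I' S V I h' h hgt).elim
    subst hII
    obtain ⟨hS, hV, hI, e1, e2, e3⟩ := h
    obtain ⟨hS', hV', hI', e1', e2', e3'⟩ := h'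
    have hSS : S = S' := by
      rcases lt_trichotomy S S' with hlt | heq | hgt
      · exfalso
        have h1 := hF₂monoS I hI.le S S' hS.le hlt.le
        have h2 := mul_lt_mul_of_pos_left hlt hlam0
        linarith
      · exact heq
      · exfalso
        have h1 := hF₂monoS I hI.le S' S hS'.le hgt.le
        have h2 := mul_lt_mul_of_pos_left hgt hlam0
        linarith
    subst hSS
    have hD : 0 < μ + k * I := by positivity
    have hVV : V = V' := by
      have h1 : (μ + k * I) * V = (μ + k * I) * V' := by linarith
      exact mul_left_cancel₀ hD.ne' h1
    exact ⟨rfl, hVV, rfl⟩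
  -- construction of φ
  have hexu_ex : ∀ I : ℝ, ∃ S : ℝ, 0 ≤ I → (0 < S ∧ S ≤ S0 ∧ F₂ S I + lam * S = Λ) := by
    intro I
    by_cases hI : 0 ≤ I
    · have hcont : ContinuousOn (fun S => F₂ S I + lam * S) (Set.Icc 0 S0) := by
        intro x hx
        exact (((hdF₂S x I hx.1 hI).add (((hasDerivAt_id x).const_mul
          lam))).continuousAt).continuousWithinAt
      have hivt := intermediate_value_Icc hS0pos.le hcont
      have hmem : Λ ∈ Set.Icc ((fun S => F₂ S I + lam * S) 0) ((fun S => F₂ S I + lam * S) S0) := by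
        constructor
        · show F₂ 0 I + lam * 0 ≤ Λ
          rw [(hF₂zero 0 I le_rfl hI).1]
          linarith
        · show Λ ≤ F₂ S0 I + lam * S0
          have := hF₂nn S0 I hS0pos.le hI
          linarith [hS0eq]
      obtain ⟨S, hSmem, hSeq⟩ := hivt hmem
      refine ⟨S, fun _ => ⟨?_, hSmem.2, hSeq⟩⟩
      rcases hSmem.1.eq_or_lt with h | h
      · exfalso
        rw [← h] at hSeq
        simp only at hSeq
        rw [(hF₂zero 0 I le_rfl hI).1] at hSeq
        linarith
      · exact h
    · exact ⟨1, fun h => absurd h hI⟩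
  choose φ hφ using hexu_ex
  have huniqS : ∀ I : ℝ, 0 ≤ I → ∀ S1 S2 : ℝ, 0 ≤ S1 → 0 ≤ S2 →
      F₂ S1 I + lam * S1 = Λ → F₂ S2 I + lam * S2 = Λ → S1 = S2 := by
    intro I hI S1 S2 h1 h2 q1 q2
    rcases lt_trichotomy S1 S2 with h | h | h
    · exfalso
      have hm := hF₂monoS I hI S1 S2 h1 h.le
      have h2' := mul_lt_mul_of_pos_left h hlam0
      linarith
    · exact h
    · exfalso
      have hm := hF₂monoS I hI S2 S1 h2 h.le
      have h2' := mul_lt_mul_of_pos_left h hlam0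
      linarith
  have hφ0 : φ 0 = S0 := by
    refine huniqS 0 le_rfl (φ 0) S0 (hφ 0 le_rfl).1.le hS0pos.le (hφ 0 le_rfl).2.2 ?_
    rw [(hF₂zero S0 0 hS0pos.le le_rfl).2]
    linarith [hS0eq]
  -- continuity of φ
  have hφcont : ∀ I₀ : ℝ, 0 ≤ I₀ → ContinuousWithinAt φ (Set.Ici 0) I₀ := by
    intro I₀ hI₀
    obtain ⟨hp0, hle0, heq0⟩ := hφ I₀ hI₀
    rw [Metric.continuousWithinAt_iff]
    intro ε hε
    set e := min (ε / 2) (φ I₀ / 2) with hedef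
    have he : 0 < e := lt_min (by linarith) (by linarith)
    have heε : e < ε := lt_of_le_of_lt (min_le_left _ _) (by linarith)
    have hlo : 0 ≤ φ I₀ - e := by
      have := min_le_right (ε / 2) (φ I₀ / 2); linarith
    have hgap1 : 0 < Λ - (F₂ (φ I₀ - e) I₀ + lam * (φ I₀ - e)) := by
      have hm := hF₂monoS I₀ hI₀ (φ I₀ - e) (φ I₀) hlo (by linarith)
      nlinarith [mul_pos hlam0 he]
    obtain ⟨δ₁, hδ₁, hd1⟩ := Metric.continuousAt_iff.1
      ((hdF₂I (φ I₀ - e) I₀ hlo hI₀).continuousAt) _ hgap1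
    have hstep : ∀ x ∈ Set.Ici (0 : ℝ), dist x I₀ < δ₁ → φ I₀ - e < φ x := by
      intro x hx hdx
      by_contra hcon
      push_neg at hcon
      obtain ⟨hpx, hlex, heqx⟩ := hφ x hx
      have h1 : F₂ (φ x) x + lam * φ x ≤ F₂ (φ I₀ - e) x + lam * (φ I₀ - e) := by
        have hm := hF₂monoS x hx (φ x) (φ I₀ - e) hpx.le hcon
        have hm2 := mul_le_mul_of_nonneg_left hcon hlam0.le
        linarith
      have h2 := hd1 hdx
      rw [Real.dist_eq] at h2
      have h3 := abs_lt.1 h2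
      linarith [h3.2]
    by_cases hub : φ I₀ + e ≤ S0
    · have hgap2 : 0 < (F₂ (φ I₀ + e) I₀ + lam * (φ I₀ + e)) - Λ := by
        have hm := hF₂monoS I₀ hI₀ (φ I₀) (φ I₀ + e) hp0.le (by linarith)
        nlinarith [mul_pos hlam0 he]
      obtain ⟨δ₂, hδ₂, hd2⟩ := Metric.continuousAt_iff.1
        ((hdF₂I (φ I₀ + e) I₀ (by linarith) hI₀).continuousAt) _ hgap2
      refine ⟨min δ₁ δ₂, lt_min hδ₁ hδ₂, ?_⟩
      intro x hx hdx
      have hx1 := hstep x hx (lt_of_lt_of_le hdx (min_le_left _ _))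
      have hx2 : φ x < φ I₀ + e := by
        by_contra hcon
        push_neg at hcon
        obtain ⟨hpx, hlex, heqx⟩ := hφ x hx
        have h1 : F₂ (φ I₀ + e) x + lam * (φ I₀ + e) ≤ F₂ (φ x) x + lam * φ x := by
          have hm := hF₂monoS x hx (φ I₀ + e) (φ x) (by linarith) hcon
          have hm2 := mul_le_mul_of_nonneg_left hcon hlam0.le
          linarith
        have h2 := hd2 (lt_of_lt_of_le hdx (min_le_right _ _))
        rw [Real.dist_eq] at h2
        have h3 := abs_lt.1 h2
        linarith [h3.1]
      rw [Real.dist_eq, abs_lt]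
      constructor <;> linarith
    · push_neg at hub
      refine ⟨δ₁, hδ₁, ?_⟩
      intro x hx hdx
      have hx1 := hstep x hx hdx
      obtain ⟨hpx, hlex, heqx⟩ := hφ x hx
      rw [Real.dist_eq, abs_lt]
      constructor <;> linarith
  -- the threshold function Φ and its continuity on [0, M]
  set M : ℝ := (Λ + r * S0) / α₂ + 1 with hMdef
  have hM : 0 < M := by rw [hMdef]; positivity
  clear_value M
  have hφcM : ContinuousOn φ (Set.Icc 0 M) :=
    fun x hx => (hφcont x hx.1).mono Set.Icc_subset_Ici_self
  have hpair : ContinuousOn (fun I => ((φ I, I) : ℝ × ℝ)) (Set.Icc 0 M) :=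
    hφcM.prodMk continuousOn_id
  have hmaps : Set.MapsTo (fun I => ((φ I, I) : ℝ × ℝ)) (Set.Icc 0 M)
      {p : ℝ × ℝ | 0 ≤ p.1 ∧ 0 ≤ p.2} := fun x hx => ⟨(hφ x hx.1).1.le, hx.1⟩
  have hΦcont : ContinuousOn (fun I => f₂ (φ I) I + k * r * φ I / (μ + k * I)) (Set.Icc 0 M) := by
    apply ContinuousOn.add
    · exact ContinuousOn.comp hf₂C1.continuousOn hpair hmaps
    · apply ContinuousOn.div
      · exact continuousOn_const.mul hφcM
      · exact (continuous_const.add (continuous_const.mul continuous_id)).continuousOn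
      · intro x hx
        have := hx.1
        positivity
  have hΦ0eq : f₂ (φ 0) 0 + k * r * φ 0 / (μ + k * 0) = f₂ S0 0 + k * r * S0 / μ := by
    rw [hφ0]; norm_num
  -- existence direction
  have exist : 1 < R₂ → (∃ St Vt It : ℝ, 0 < St ∧ 0 < Vt ∧ 0 < It ∧
      Λ - F₂ St It - lam * St = 0 ∧ r * St - (μ + k * It) * Vt = 0 ∧
      F₂ St It + k * It * Vt - α₂ * It = 0) := by
    intro hR
    have hΦ0gt : α₂ < f₂ S0 0 + k * r * S0 / μ := by
      rw [← hR2val]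
      nlinarith [hα₂0]
    have hΦM : f₂ (φ M) M + k * r * φ M / (μ + k * M) < α₂ := by
      obtain ⟨hp, hle, heq⟩ := hφ M hM.le
      have h1 : M * f₂ (φ M) M + lam * φ M = Λ := by rw [← hH1₂]; linarith
      have hDM : 0 < μ + k * M := by positivity
      have hq : k * r * φ M / (μ + k * M) * (μ + k * M) = k * r * φ M :=
        div_mul_cancel₀ _ hDM.ne'
      have hq0 : 0 ≤ k * r * φ M / (μ + k * M) := by positivity
      have hαM : α₂ * M = Λ + r * S0 + α₂ := by
        rw [hMdef]; field_simp
      have hqM : k * r * φ M / (μ + k * M) * M ≤ r * S0 := by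
        nlinarith [mul_nonneg hq0 hμ.le, mul_le_mul_of_nonneg_left hle (mul_pos hk hr).le]
      have hf2M : f₂ (φ M) M * M ≤ Λ := by
        nlinarith [mul_nonneg hlam0.le hp.le]
      by_contra hcon
      push_neg at hcon
      nlinarith [mul_le_mul_of_nonneg_right hcon hM.le, hα₂0]
    have hsub := intermediate_value_Icc' hM.le hΦcont
    have hmem : α₂ ∈ Set.Icc ((fun I => f₂ (φ I) I + k * r * φ I / (μ + k * I)) M)
        ((fun I => f₂ (φ I) I + k * r * φ I / (μ + k * I)) 0) := by
      constructor
      · exact hΦM.le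
      · show α₂ ≤ f₂ (φ 0) 0 + k * r * φ 0 / (μ + k * 0)
        rw [hΦ0eq]
        exact hΦ0gt.le
    obtain ⟨I0, hI0mem, hI0eq⟩ := hsub hmem
    have hI0eq' : f₂ (φ I0) I0 + k * r * φ I0 / (μ + k * I0) = α₂ := hI0eq
    have hI0pos : 0 < I0 := by
      rcases hI0mem.1.eq_or_lt with h | h
      · exfalso
        rw [← h] at hI0eq'
        rw [hΦ0eq] at hI0eq'
        linarith
      · exact h
    obtain ⟨hp, hle, heq⟩ := hφ I0 hI0pos.le
    have hD : 0 < μ + k * I0 := by positivity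
    refine ⟨φ I0, r * φ I0 / (μ + k * I0), I0, hp, by positivity, hI0pos, by linarith, ?_, ?_⟩
    · field_simp
      ring
    · rw [hH1₂]
      linear_combination I0 * hI0eq'
  exact ⟨⟨fwd, exist⟩, uniq⟩
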